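/- On ℝ⁶ with coordinates (x,y,z,p,q,h), let Ω = dx∧dp + dy∧dq + dz∧dh and, for a real constant γ, let ω_γ = dp∧dq∧dz + dx∧dy∧dh − γ·dx∧dy∧dz (the Monge–Ampère structure of the Chynoweth–Sewell equation f_xx f_yy − f_xy² + f_zz = γ). Then the linear map φ(x,y,z,p,q,h) = (x, y, h, p, q, γh − z) satisfies φ^*Ω = Ω (φ is a linear symplectomorphism) and φ^*ω_γ = dp∧dq∧dh − dx∧dy∧dz (the effective form of the classical Monge–Ampère equation hess(f) = 1); hence every Chynoweth–Sewell equation is symplectically equivalent to hess(f) = 1. -/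
import Mathlib


open scoped TensorProduct

/-- The wedge product of alternating forms with values in a commutative algebra `A`
(determinant/shuffle convention, via `AlternatingMap.domCoprod`). -/
noncomputable def wedge {V : Type*} [AddCommGroup V] [Module ℝ V]
    {A : Type*} [CommRing A] [Algebra ℝ A] {k l : ℕ}
    (α : AlternatingMap ℝ V A (Fin k)) (β : AlternatingMap ℝ V A (Fin l)) :
    AlternatingMap ℝ V A (Fin (k + l)) :=
  (LinearMap.mul' ℝ A).compAlternatingMap ((α.domCoprod β).domDomCongr finSumFinEquiv)

/-- A covector regarded as an alternating `1`-form. -/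
noncomputable def oneForm {V : Type*} [AddCommGroup V] [Module ℝ V]
    {A : Type*} [CommRing A] [Algebra ℝ A] (ξ : V →ₗ[ℝ] A) :
    AlternatingMap ℝ V A (Fin 1) :=
  AlternatingMap.ofSubsingleton ℝ V A (0 : Fin 1) ξ

/-- The coordinate covectors `dx, dy, dz, dp, dq, dh` on `ℝ⁶` (indices `0,…,5`). -/
noncomputable def dcoord (i : Fin 6) : (Fin 6 → ℝ) →ₗ[ℝ] ℝ := LinearMap.proj i

/-- Wedge of three covectors on `ℝ⁶`. -/
noncomputable def w3 (a b c : (Fin 6 → ℝ) →ₗ[ℝ] ℝ) :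
    AlternatingMap ℝ (Fin 6 → ℝ) ℝ (Fin 3) :=
  (wedge (oneForm a) (wedge (oneForm b) (oneForm c))).domDomCongr (finCongr rfl)

/-- Wedge of two covectors on `ℝ⁶`. -/
noncomputable def w2 (a b : (Fin 6 → ℝ) →ₗ[ℝ] ℝ) :
    AlternatingMap ℝ (Fin 6 → ℝ) ℝ (Fin 2) :=
  (wedge (oneForm a) (oneForm b)).domDomCongr (finCongr rfl)

/-- The symplectic form `Ω = dx∧dp + dy∧dq + dz∧dh` on `ℝ⁶`. -/
noncomputable def ΩCS : AlternatingMap ℝ (Fin 6 → ℝ) ℝ (Fin 2) :=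
  w2 (dcoord 0) (dcoord 3) + w2 (dcoord 1) (dcoord 4) + w2 (dcoord 2) (dcoord 5)

/-- The effective form `ω_γ = dp∧dq∧dz + dx∧dy∧dh − γ·dx∧dy∧dz` of the
Chynoweth–Sewell equation. -/
noncomputable def ωCS (γ : ℝ) : AlternatingMap ℝ (Fin 6 → ℝ) ℝ (Fin 3) :=
  w3 (dcoord 3) (dcoord 4) (dcoord 2) + w3 (dcoord 0) (dcoord 1) (dcoord 5)
    - γ • w3 (dcoord 0) (dcoord 1) (dcoord 2)

/-- The linear map `φ(x,y,z,p,q,h) = (x, y, h, p, q, γh − z)`. -/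
noncomputable def φCS (γ : ℝ) : (Fin 6 → ℝ) →ₗ[ℝ] (Fin 6 → ℝ) :=
  LinearMap.pi ![dcoord 0, dcoord 1, dcoord 5, dcoord 3, dcoord 4,
    γ • dcoord 5 - dcoord 2]


lemma cons_val_five' {α : Type*} (a b c d e f : α) : (![a,b,c,d,e,f] : Fin 6 → α) 5 = f := rfl

lemma dc1 (a b : (Fin 6 → ℝ) →ₗ[ℝ] ℝ) :
    ((oneForm a).domCoprod (oneForm b) : AlternatingMap ℝ (Fin 6 → ℝ) (ℝ ⊗[ℝ] ℝ) (Fin 1 ⊕ Fin 1))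
      = MultilinearMap.alternatization
          (MultilinearMap.domCoprod (oneForm a) (oneForm b)) := by
  rw [MultilinearMap.domCoprod_alternization_eq]
  simp

lemma w2_apply (a b : (Fin 6 → ℝ) →ₗ[ℝ] ℝ) (v : Fin 2 → Fin 6 → ℝ) :
    w2 a b v = a (v 0) * b (v 1) - a (v 1) * b (v 0) := by
  simp only [w2, wedge, AlternatingMap.domDomCongr_apply, LinearMap.compAlternatingMap_apply,
    AlternatingMap.domDomCongr_apply]
  rw [dc1, MultilinearMap.alternatization_apply]
  rw [show (Finset.univ : Finset (Equiv.Perm (Fin 1 ⊕ Fin 1))) =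
    {1, Equiv.swap (Sum.inl 0) (Sum.inr 0)} from by decide]
  rw [Finset.sum_insert (by decide), Finset.sum_singleton]
  simp [MultilinearMap.domCoprod_apply, oneForm, Equiv.swap_apply_def,
    show (finSumFinEquiv (Sum.inl (0:Fin 1)) : Fin (1+1)) = 0 from rfl,
    show (finSumFinEquiv (Sum.inr (0:Fin 1)) : Fin (1+1)) = 1 from rfl]
  ring

lemma wedge11_apply (b c : (Fin 6 → ℝ) →ₗ[ℝ] ℝ) (u : Fin (1+1) → Fin 6 → ℝ) :
    wedge (oneForm b) (oneForm c) u = b (u 0) * c (u 1) - b (u 1) * c (u 0) := by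
  simp only [wedge, AlternatingMap.domDomCongr_apply, LinearMap.compAlternatingMap_apply]
  rw [dc1, MultilinearMap.alternatization_apply]
  rw [show (Finset.univ : Finset (Equiv.Perm (Fin 1 ⊕ Fin 1))) =
    {1, Equiv.swap (Sum.inl 0) (Sum.inr 0)} from by decide]
  rw [Finset.sum_insert (by decide), Finset.sum_singleton]
  simp [MultilinearMap.domCoprod_apply, oneForm, Equiv.swap_apply_def,
    show (finSumFinEquiv (Sum.inl (0:Fin 1)) : Fin (1+1)) = 0 from rfl,
    show (finSumFinEquiv (Sum.inr (0:Fin 1)) : Fin (1+1)) = 1 from rfl]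
  ring

lemma dc2 (a : (Fin 6 → ℝ) →ₗ[ℝ] ℝ) (β : AlternatingMap ℝ (Fin 6 → ℝ) ℝ (Fin (1+1))) :
    ((oneForm a).domCoprod β : AlternatingMap ℝ (Fin 6 → ℝ) (ℝ ⊗[ℝ] ℝ) (Fin 1 ⊕ Fin (1+1)))
      = (2:ℝ)⁻¹ • MultilinearMap.alternatization
          (MultilinearMap.domCoprod (oneForm a) β) := by
  rw [MultilinearMap.domCoprod_alternization_eq,
    show ((Fintype.card (Fin 1)).factorial * (Fintype.card (Fin (1+1))).factorial) = 2 from rfl,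
    ← Nat.cast_smul_eq_nsmul ℝ, smul_smul]
  norm_num

lemma w3_apply (a b c : (Fin 6 → ℝ) →ₗ[ℝ] ℝ) (v : Fin 3 → Fin 6 → ℝ) :
    w3 a b c v =
      a (v 0) * (b (v 1) * c (v 2) - b (v 2) * c (v 1))
      - a (v 1) * (b (v 0) * c (v 2) - b (v 2) * c (v 0))
      + a (v 2) * (b (v 0) * c (v 1) - b (v 1) * c (v 0)) := by
  simp only [w3]
  generalize hβ : wedge (oneForm b) (oneForm c) = β
  simp only [wedge, AlternatingMap.domDomCongr_apply, LinearMap.compAlternatingMap_apply]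
  rw [dc2, AlternatingMap.smul_apply, MultilinearMap.alternatization_apply]
  rw [show (Finset.univ : Finset (Equiv.Perm (Fin 1 ⊕ Fin (1+1)))) =
    {1, Equiv.swap (Sum.inl 0) (Sum.inr 0), Equiv.swap (Sum.inl 0) (Sum.inr 1),
      Equiv.swap (Sum.inr 0) (Sum.inr 1),
      Equiv.swap (Sum.inl 0) (Sum.inr 0) * Equiv.swap (Sum.inr 0) (Sum.inr 1),
      Equiv.swap (Sum.inr 0) (Sum.inr 1) * Equiv.swap (Sum.inl 0) (Sum.inr 0)} from by decide]
  rw [Finset.sum_insert (by decide), Finset.sum_insert (by decide),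
    Finset.sum_insert (by decide), Finset.sum_insert (by decide),
    Finset.sum_insert (by decide), Finset.sum_singleton]
  rw [← hβ]
  simp [MultilinearMap.domCoprod_apply, wedge11_apply,
    show ∀ (ξ : (Fin 6 → ℝ) →ₗ[ℝ] ℝ) (u : Fin 1 → Fin 6 → ℝ), oneForm ξ u = ξ (u 0) from
      fun _ _ => rfl, Equiv.swap_apply_def,
    Equiv.Perm.mul_apply,
    show ∀ x : Fin 1 ⊕ Fin (1+1), finSumFinEquiv x = (match x with
      | Sum.inl 0 => 0 | Sum.inr 0 => 1 | Sum.inr 1 => 2 : Fin 3) from by decide]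
  ring

/-- The map `φ(x,y,z,p,q,h) = (x,y,h,p,q,γh−z)` is a linear symplectomorphism of
`(ℝ⁶, Ω)` pulling the Chynoweth–Sewell form `ω_γ` back to the effective form
`dp∧dq∧dh − dx∧dy∧dz` of the classical Monge–Ampère equation `hess(f) = 1`. -/
theorem chynoweth_sewell_equiv_hess_one (γ : ℝ) :
    ΩCS.compLinearMap (φCS γ) = ΩCS ∧
    (ωCS γ).compLinearMap (φCS γ) =
      w3 (dcoord 3) (dcoord 4) (dcoord 5) - w3 (dcoord 0) (dcoord 1) (dcoord 2) := by
  constructor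
  · ext v
    simp [ΩCS, AlternatingMap.compLinearMap_apply, w2_apply, φCS, dcoord,
      LinearMap.pi_apply, LinearMap.proj_apply, LinearMap.sub_apply, LinearMap.smul_apply,
      cons_val_five']
    ring
  · ext v
    simp [ωCS, AlternatingMap.compLinearMap_apply, w3_apply, φCS, dcoord,
      LinearMap.pi_apply, LinearMap.proj_apply, LinearMap.sub_apply, LinearMap.smul_apply,
      cons_val_five']
    ring
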